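/- arXiv:2207.14089 — 2 statements merged into one kernel-verified Lean document; each statement's English description precedes it below -/
import Mathlib

section
/- Let m₁, m₂, n be positive integers and ℓ an integer, and let C = [[1 + m₁m₂, m₁],[m₂, 1]] over ℝ. Then |det((-1)^ℓ · C^n − I)| = |λ₊^n + λ₋^n + (−1)^(ℓ+1)·2|, where λ± = (2 + m₁m₂ ± √(m₁²m₂² + 4m₁m₂))/2. -/
theorem stmt_8 (m₁ m₂ n : ℕ) (hm₁ : 0 < m₁) (hm₂ : 0 < m₂) (hn : 0 < n) (l : ℤ) :
    let C : Matrix (Fin 2) (Fin 2) ℝ := !![1 + (m₁ : ℝ) * m₂, (m₁ : ℝ); (m₂ : ℝ), 1]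
    |((-1 : ℝ) ^ l • C ^ n - 1).det| =
      |((2 + m₁ * m₂ + Real.sqrt ((m₁ : ℝ) ^ 2 * m₂ ^ 2 + 4 * m₁ * m₂)) / 2) ^ n +
       ((2 + m₁ * m₂ - Real.sqrt ((m₁ : ℝ) ^ 2 * m₂ ^ 2 + 4 * m₁ * m₂)) / 2) ^ n +
       (-1 : ℝ) ^ (l + 1) * 2| := by
  intro C
  set p : ℝ := (m₁ : ℝ) * m₂ with hp
  set s : ℝ := Real.sqrt ((m₁ : ℝ) ^ 2 * m₂ ^ 2 + 4 * m₁ * m₂) with hs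
  have hd : (0:ℝ) ≤ (m₁ : ℝ) ^ 2 * m₂ ^ 2 + 4 * m₁ * m₂ := by positivity
  have hs2 : s ^ 2 = (m₁ : ℝ) ^ 2 * m₂ ^ 2 + 4 * m₁ * m₂ := Real.sq_sqrt hd
  set a : ℝ := (2 + p + s) / 2 with ha
  set b : ℝ := (2 + p - s) / 2 with hb
  have hab : a * b = 1 := by
    rw [ha, hb]
    have h : (2 + p + s) / 2 * ((2 + p - s) / 2) = ((2+p)^2 - s^2)/4 := by ring
    rw [h, hs2, hp]; ring
  have hsum : a + b = 2 + p := by rw [ha, hb]; ring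
  have hC2 : C ^ 2 = (2 + p) • C - 1 := by
    ext i j
    fin_cases i <;> fin_cases j <;>
      simp [C, pow_two, Matrix.mul_apply, Fin.sum_univ_two, Matrix.one_apply] <;> ring
  have hrec : ∀ k, C ^ (k+2) = (2+p) • C ^ (k+1) - C ^ k := by
    intro k
    have h1 : C ^ (k+2) = C ^ k * C ^ 2 := by rw [← pow_add]
    rw [h1, hC2, Matrix.mul_sub, Matrix.mul_one, mul_smul_comm, ← pow_succ]
  have htr : ∀ k, (C ^ k).trace = a ^ k + b ^ k := by
    intro k
    induction k using Nat.twoStepInduction with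
    | zero => simp [Matrix.trace_one]; norm_num
    | one => simp [C, Matrix.trace_fin_two]; linear_combination hsum.symm
    | more k ih1 ih2 =>
      rw [hrec k, Matrix.trace_sub, Matrix.trace_smul, ih2, ih1, smul_eq_mul]
      linear_combination (a^(k+1)+b^(k+1)) * hsum.symm + (a^k + b^k) * hab
  set ε : ℝ := (-1 : ℝ) ^ l with hε
  have hεne : (-1 : ℝ) ≠ 0 := by norm_num
  have hε2 : ε * ε = 1 := by
    rw [hε, ← zpow_add₀ hεne]
    exact Even.neg_one_zpow ⟨l, rfl⟩
  have hdC : C.det = 1 := by simp [C, Matrix.det_fin_two_of]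
  have hdCn : (C ^ n).det = 1 := by rw [Matrix.det_pow, hdC, one_pow]
  have hdet : (ε • C ^ n - 1).det
      = ε * ε * (C ^ n).det - ε * (C ^ n).trace + 1 := by
    rw [Matrix.det_fin_two, Matrix.det_fin_two, Matrix.trace_fin_two]
    simp [Matrix.sub_apply, Matrix.smul_apply, Matrix.one_apply]
    ring
  have hε1 : (-1 : ℝ) ^ (l + 1) = -ε := by
    rw [zpow_add₀ hεne, hε]; ring
  rw [hdet, hε2, hdCn, htr n, hε1]
  have key : 1 * 1 - ε * (a ^ n + b ^ n) + 1 = (-ε) * (a ^ n + b ^ n + -ε * 2) := by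
    have : ε * ε = 1 := hε2
    nlinarith [hε2]
  rw [key, abs_mul]
  have habs : |(-ε)| = 1 := by
    rw [abs_neg]
    rcases mul_self_eq_one_iff.mp hε2 with h | h <;> rw [h] <;> norm_num
  rw [habs, one_mul]
end

section
/- Let C = [[1 + m², m],[m, 1]] over ℤ for a positive integer m, and define L_{m,k} by L_{m,0}=2, L_{m,1}=m, L_{m,k+2}=m·L_{m,k+1}+L_{m,k}. Then for all n ≥ 1, |det(C^n − I)| = L_{m,2n} − 2 and |det(C^n + I)| = L_{m,2n} + 2. -/
def mLucas (m : ℕ) : ℕ → ℤ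
  | 0 => 2
  | 1 => m
  | k + 2 => m * mLucas m (k + 1) + mLucas m k

lemma mLucas_pos (m : ℕ) (hm : 0 < m) : ∀ k, 1 ≤ mLucas m k
  | 0 => by simp [mLucas]
  | 1 => by have hm1 : 1 ≤ m := hm; simpa [mLucas] using hm1
  | (k + 2) => by
      have h1 := mLucas_pos m hm (k + 1)
      have h0 := mLucas_pos m hm k
      have hm' : (1 : ℤ) ≤ m := by exact_mod_cast hm
      simp only [mLucas]
      nlinarith

lemma mLucas_even_ge (m : ℕ) (hm : 0 < m) : ∀ n, 2 ≤ mLucas m (2 * n)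
  | 0 => by simp [mLucas]
  | (n + 1) => by
      have h0 := mLucas_even_ge m hm n
      have h1 := mLucas_pos m hm (2 * n + 1)
      have hm' : (1 : ℤ) ≤ m := by exact_mod_cast hm
      have : 2 * (n + 1) = (2 * n) + 2 := by ring
      rw [this]
      simp only [mLucas]
      nlinarith

lemma mLucas_even_rec (m : ℕ) (n : ℕ) :
    mLucas m (2 * (n + 2)) = ((m : ℤ) ^ 2 + 2) * mLucas m (2 * (n + 1)) - mLucas m (2 * n) := by
  have e2 : 2 * (n + 2) = (2 * n + 2) + 2 := by ring
  have e1 : 2 * (n + 1) = 2 * n + 2 := by ring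
  rw [e2, e1]
  show mLucas m (2 * n + 2 + 2) = _
  have h3 : mLucas m (2 * n + 2 + 2)
      = m * mLucas m (2 * n + 3) + mLucas m (2 * n + 2) := rfl
  have h2 : mLucas m (2 * n + 3) = m * mLucas m (2 * n + 2) + mLucas m (2 * n + 1) := rfl
  have h1 : mLucas m (2 * n + 2) = m * mLucas m (2 * n + 1) + mLucas m (2 * n) := rfl
  rw [h3, h2]
  nlinarith [h1]

lemma trace_pow (m : ℕ) :
    ∀ n, (!![1 + (m : ℤ) ^ 2, (m : ℤ); (m : ℤ), 1] ^ n).trace = mLucas m (2 * n)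
  | 0 => by
      simp [Matrix.trace_one, mLucas]
  | 1 => by
      show (!![1 + (m : ℤ) ^ 2, (m : ℤ); (m : ℤ), 1] ^ 1).trace = mLucas m 2
      have : mLucas m 2 = m * mLucas m 1 + mLucas m 0 := rfl
      rw [pow_one, this]
      simp [Matrix.trace_fin_two, mLucas]
      ring
  | (n + 2) => by
      set C : Matrix (Fin 2) (Fin 2) ℤ := !![1 + (m : ℤ) ^ 2, (m : ℤ); (m : ℤ), 1] with hC
      have hCH : C ^ 2 = ((m : ℤ) ^ 2 + 2) • C - 1 := by
        rw [hC]
        ext i j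
        fin_cases i <;> fin_cases j <;>
          simp [pow_two, Matrix.mul_apply, Fin.sum_univ_succ, Matrix.one_apply] <;> ring
      have key : C ^ (n + 2) = ((m : ℤ) ^ 2 + 2) • C ^ (n + 1) - C ^ n := by
        have : C ^ (n + 2) = C ^ n * C ^ 2 := by rw [← pow_add]
        rw [this, hCH, mul_sub, mul_smul_comm, mul_one, ← pow_succ]
      rw [key, Matrix.trace_sub, Matrix.trace_smul, trace_pow m (n + 1), trace_pow m n,
        mLucas_even_rec m n]
      simp

lemma det_pow_one (m : ℕ) (n : ℕ) :
    (!![1 + (m : ℤ) ^ 2, (m : ℤ); (m : ℤ), 1] ^ n).det = 1 := by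
  rw [Matrix.det_pow]
  have : (!![1 + (m : ℤ) ^ 2, (m : ℤ); (m : ℤ), 1]).det = 1 := by
    simp [Matrix.det_fin_two_of]; ring
  rw [this, one_pow]

lemma det_sub_one (A : Matrix (Fin 2) (Fin 2) ℤ) :
    (A - 1).det = A.det - A.trace + 1 := by
  simp [Matrix.det_fin_two, Matrix.trace_fin_two, Matrix.sub_apply, Matrix.one_apply]
  ring

lemma det_add_one (A : Matrix (Fin 2) (Fin 2) ℤ) :
    (A + 1).det = A.det + A.trace + 1 := by
  simp [Matrix.det_fin_two, Matrix.trace_fin_two, Matrix.add_apply, Matrix.one_apply]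
  ring

theorem stmt_14 (m : ℕ) (hm : 0 < m) (n : ℕ) (hn : 1 ≤ n) :
    let C : Matrix (Fin 2) (Fin 2) ℤ := !![1 + (m : ℤ) ^ 2, (m : ℤ); (m : ℤ), 1]
    |(C ^ n - 1).det| = mLucas m (2 * n) - 2 ∧
      |(C ^ n + 1).det| = mLucas m (2 * n) + 2 := by
  intro C
  have htr := trace_pow m n
  have hdet := det_pow_one m n
  have hL := mLucas_even_ge m hm n
  constructor
  · rw [det_sub_one, htr, hdet]
    rw [abs_of_nonpos (by linarith)]
    ring
  · rw [det_add_one, htr, hdet]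
    rw [abs_of_nonneg (by linarith)]
    ring
end
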